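/- arXiv:1508.05554 — 5 statements merged into one kernel-verified Lean document; each statement's English description precedes it below -/
import Mathlib

section
/- Let m, n ∈ ℕ and let a = (a_i)_{i ∈ M(m,n)} be a complex matrix indexed by M(m,n) = {1,…,n}^m. For every nonempty subset S ⊆ M(m,n), ∑_{i ∈ S} |a_i| ≤ m · E(S) · ‖a‖_{ℓ_{m/(m-1),∞}}, where E(S) = max_{1≤k≤m} card{ i_k : i ∈ S } and ‖a‖_{ℓ_{m/(m-1),∞}} = sup_k k^{(m-1)/m} a*_k with a* the non-increasing rearrangement of (|a_i|). -/
/-- The non-increasing rearrangement of a finite family of complex numbers: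
`rearrF x k = inf {λ ≥ 0 : card {i : |x i| > λ} ≤ k}`, so that `x*_j = rearrF x (j-1)`. -/
noncomputable def rearrF {ι : Type*} [Fintype ι] (x : ι → ℂ) (k : ℕ) : ℝ :=
  sInf {l : ℝ | 0 ≤ l ∧ Nat.card {i : ι // l < ‖x i‖} ≤ k}

lemma rearrF_nonneg {ι : Type*} [Fintype ι] (x : ι → ℂ) (k : ℕ) : 0 ≤ rearrF x k :=
  Real.sInf_nonneg (fun _ hl => hl.1)

lemma le_rearrF {ι : Type*} [Fintype ι] (x : ι → ℂ) (k : ℕ) (v : ℝ) (hv : 0 ≤ v)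
    (T : Finset ι) (hT : k < T.card) (h : ∀ i ∈ T, v ≤ ‖x i‖) :
    v ≤ rearrF x k := by
  apply le_csInf
  · refine ⟨∑ i, ‖x i‖, Finset.sum_nonneg (fun i _ => norm_nonneg _), ?_⟩
    have : IsEmpty {i : ι // ∑ j, ‖x j‖ < ‖x i‖} := by
      refine ⟨fun ⟨i, hi⟩ => absurd hi (not_lt.2 ?_)⟩
      exact Finset.single_le_sum (fun j _ => norm_nonneg _) (Finset.mem_univ i)
    simp [Nat.card_of_isEmpty]
  · rintro l ⟨hl0, hl⟩
    by_contra hlt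
    push_neg at hlt
    have hsub : T ⊆ Finset.univ.filter (fun i => l < ‖x i‖) := by
      intro i hi
      exact Finset.mem_filter.2 ⟨Finset.mem_univ i, lt_of_lt_of_le hlt (h i hi)⟩
    have hcard : T.card ≤ Nat.card {i : ι // l < ‖x i‖} := by
      rw [Nat.card_eq_fintype_card, Fintype.card_subtype]
      exact Finset.card_le_card hsub
    omega

lemma sum_le_sum_rearrF {ι : Type*} [Fintype ι] [DecidableEq ι] (x : ι → ℂ) :
    ∀ (N : ℕ) (S : Finset ι), S.card = N →
      ∑ i ∈ S, ‖x i‖ ≤ ∑ k ∈ Finset.range N, rearrF x k := by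
  intro N
  induction N with
  | zero => intro S hc; simp [Finset.card_eq_zero.1 hc]
  | succ N ih =>
    intro S hc
    have hne : S.Nonempty := Finset.card_pos.1 (by omega)
    obtain ⟨i₀, hi₀, hmin⟩ := S.exists_min_image (fun i => ‖x i‖) hne
    have h1 : ∑ i ∈ S.erase i₀, ‖x i‖ ≤ ∑ k ∈ Finset.range N, rearrF x k := by
      apply ih
      rw [Finset.card_erase_of_mem hi₀, hc]; omega
    have h2 : ‖x i₀‖ ≤ rearrF x N := by
      apply le_rearrF x N _ (norm_nonneg _) S (by omega)
      intro i hi; exact hmin i hi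
    calc ∑ i ∈ S, ‖x i‖
        = ‖x i₀‖ + ∑ i ∈ S.erase i₀, ‖x i‖ :=
          (Finset.add_sum_erase _ _ hi₀).symm
      _ ≤ rearrF x N + ∑ k ∈ Finset.range N, rearrF x k := add_le_add h2 h1
      _ = ∑ k ∈ Finset.range (N + 1), rearrF x k := by
          rw [Finset.sum_range_succ]; ring

lemma sum_rpow_le (m : ℕ) (hm : 1 ≤ m) (N : ℕ) :
    ∑ k ∈ Finset.range N, ((k : ℝ) + 1) ^ (-(((m : ℝ) - 1) / m))
      ≤ (m : ℝ) * (N : ℝ) ^ (1 / (m : ℝ)) := by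
  have hm0 : (0 : ℝ) < m := by exact_mod_cast hm
  set p : ℝ := 1 / (m : ℝ) with hp
  have hp0 : 0 < p := by positivity
  have hp1 : p ≤ 1 := by
    rw [hp, div_le_one hm0]; exact_mod_cast hm
  have hq : -(((m : ℝ) - 1) / m) = p - 1 := by
    rw [hp]; field_simp; ring
  have key : ∀ k : ℕ, ((k : ℝ) + 1) ^ (p - 1) ≤ (m : ℝ) * (((k : ℝ) + 1) ^ p - (k : ℝ) ^ p) := by
    intro k
    set x : ℝ := (k : ℝ) + 1 with hx
    have hx1 : (1 : ℝ) ≤ x := by simp [hx]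
    have hx0 : (0 : ℝ) < x := lt_of_lt_of_le one_pos hx1
    have hbern : (1 + (-(1 / x))) ^ p ≤ 1 + p * (-(1 / x)) := by
      apply rpow_one_add_le_one_add_mul_self _ hp0.le hp1
      have : 1 / x ≤ 1 := by rw [div_le_one hx0]; exact hx1
      linarith
    have hk : (k : ℝ) = x * (1 + (-(1 / x))) := by
      field_simp; rw [hx]; ring
    have h1 : (k : ℝ) ^ p = x ^ p * (1 + (-(1 / x))) ^ p := by
      rw [hk, Real.mul_rpow hx0.le (by
        have h : 1 / x ≤ 1 := by rw [div_le_one hx0]; exact hx1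
        linarith)]
    have h2 : (k : ℝ) ^ p ≤ x ^ p * (1 + p * (-(1 / x))) := by
      rw [h1]
      exact mul_le_mul_of_nonneg_left hbern (Real.rpow_nonneg hx0.le p)
    have h3 : x ^ p * (1 + p * (-(1 / x))) = x ^ p - p * x ^ (p - 1) := by
      have : x ^ (p - 1) = x ^ p / x := by
        rw [Real.rpow_sub hx0, Real.rpow_one]
      rw [this]; field_simp; ring
    have h4 : p * x ^ (p - 1) ≤ x ^ p - (k : ℝ) ^ p := by
      rw [h3] at h2; linarith
    have hmp : (m : ℝ) * p = 1 := by
      rw [hp]; field_simp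
    calc x ^ (p - 1) = (m : ℝ) * (p * x ^ (p - 1)) := by rw [← mul_assoc, hmp, one_mul]
      _ ≤ (m : ℝ) * (x ^ p - (k : ℝ) ^ p) := by
          apply mul_le_mul_of_nonneg_left h4 hm0.le
  calc ∑ k ∈ Finset.range N, ((k : ℝ) + 1) ^ (-(((m : ℝ) - 1) / m))
      ≤ ∑ k ∈ Finset.range N, (m : ℝ) * ((((k : ℕ) + 1 : ℕ) : ℝ) ^ p - ((k : ℕ) : ℝ) ^ p) := by
        apply Finset.sum_le_sum
        intro k _
        rw [hq]
        have := key k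
        push_cast
        convert this using 3
    _ = (m : ℝ) * ∑ k ∈ Finset.range N, ((((k + 1 : ℕ)) : ℝ) ^ p - ((k : ℕ) : ℝ) ^ p) := by
        rw [Finset.mul_sum]
    _ = (m : ℝ) * (((N : ℝ)) ^ p - ((0 : ℕ) : ℝ) ^ p) := by
        rw [Finset.sum_range_sub (fun k : ℕ => ((k : ℕ) : ℝ) ^ p)]
    _ = (m : ℝ) * (N : ℝ) ^ p := by
        rw [Nat.cast_zero, Real.zero_rpow (ne_of_gt hp0)]; ring

/-- For a matrix `a` indexed by `M(m,n) = {1,…,n}^m`, every nonempty `S ⊆ M(m,n)` and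
every upper bound `W` for the weak quasi-norm `‖a‖_{ℓ_{m/(m-1),∞}} = sup_k k^{(m-1)/m} a*_k`,
one has `∑_{i ∈ S} |a_i| ≤ m · E(S) · W`, where
`E(S) = max_{1≤k≤m} card {i_k : i ∈ S}`. -/
theorem stmt3 (m n : ℕ) (hm : 1 ≤ m) (a : (Fin m → Fin n) → ℂ)
    (S : Finset (Fin m → Fin n)) (hS : S.Nonempty) (W : ℝ)
    (hW : ∀ k : ℕ, ((k : ℝ) + 1) ^ (((m : ℝ) - 1) / m) * rearrF a k ≤ W) :
    ∑ i ∈ S, ‖a i‖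
      ≤ (m : ℝ) * ((Finset.univ.sup fun k : Fin m => (S.image fun i => i k).card : ℕ) : ℝ) * W := by
  classical
  set E : ℕ := Finset.univ.sup fun k : Fin m => (S.image fun i => i k).card with hE
  set N : ℕ := S.card with hN
  have hm0 : (0 : ℝ) < m := by exact_mod_cast hm
  have hq0 : 0 ≤ ((m : ℝ) - 1) / m := by
    apply div_nonneg _ hm0.le
    have : (1 : ℝ) ≤ m := by exact_mod_cast hm
    linarith
  -- W is nonnegative
  have hW0 : 0 ≤ W := by
    have := hW 0
    norm_num at this
    exact le_trans (rearrF_nonneg a 0) this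
  -- bound rearrF
  have hrear : ∀ k : ℕ, rearrF a k ≤ W * ((k : ℝ) + 1) ^ (-(((m : ℝ) - 1) / m)) := by
    intro k
    have hx0 : (0 : ℝ) < (k : ℝ) + 1 := by positivity
    have hpos : (0 : ℝ) < ((k : ℝ) + 1) ^ (((m : ℝ) - 1) / m) := Real.rpow_pos_of_pos hx0 _
    have := hW k
    rw [Real.rpow_neg hx0.le, mul_comm W]
    rw [mul_comm] at this
    rw [← le_div_iff₀ hpos] at this
    rwa [div_eq_inv_mul] at this
  -- N ≤ E ^ m
  have hNE : N ≤ E ^ m := by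
    have hsub : S ⊆ Fintype.piFinset (fun k : Fin m => S.image fun i => i k) := by
      intro i hi
      rw [Fintype.mem_piFinset]
      intro k
      exact Finset.mem_image_of_mem _ hi
    calc N ≤ (Fintype.piFinset (fun k : Fin m => S.image fun i => i k)).card :=
          Finset.card_le_card hsub
      _ = ∏ k : Fin m, (S.image fun i => i k).card := Fintype.card_piFinset _
      _ ≤ E ^ (Finset.univ : Finset (Fin m)).card :=
          Finset.prod_le_pow_card _ _ _ (fun k _ =>
            Finset.le_sup (f := fun k : Fin m => (S.image fun i => i k).card) (Finset.mem_univ k))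
      _ = E ^ m := by rw [Finset.card_univ, Fintype.card_fin]
  -- (N:ℝ)^(1/m) ≤ E
  have hNEr : (N : ℝ) ^ (1 / (m : ℝ)) ≤ (E : ℝ) := by
    have hE0 : (0 : ℝ) ≤ E := Nat.cast_nonneg E
    have h1 : (N : ℝ) ≤ (E : ℝ) ^ (m : ℕ) := by exact_mod_cast hNE
    calc (N : ℝ) ^ (1 / (m : ℝ)) ≤ ((E : ℝ) ^ (m : ℕ)) ^ (1 / (m : ℝ)) :=
          Real.rpow_le_rpow (Nat.cast_nonneg N) h1 (by positivity)
      _ = (E : ℝ) ^ ((m : ℝ) * (1 / (m : ℝ))) := by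
          rw [← Real.rpow_natCast (E : ℝ) m, ← Real.rpow_mul hE0]
      _ = (E : ℝ) := by
          rw [mul_one_div, div_self (ne_of_gt hm0), Real.rpow_one]
  calc ∑ i ∈ S, ‖a i‖
      ≤ ∑ k ∈ Finset.range N, rearrF a k := sum_le_sum_rearrF a N S rfl
    _ ≤ ∑ k ∈ Finset.range N, W * ((k : ℝ) + 1) ^ (-(((m : ℝ) - 1) / m)) :=
        Finset.sum_le_sum (fun k _ => hrear k)
    _ = W * ∑ k ∈ Finset.range N, ((k : ℝ) + 1) ^ (-(((m : ℝ) - 1) / m)) := by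
        rw [Finset.mul_sum]
    _ ≤ W * ((m : ℝ) * (N : ℝ) ^ (1 / (m : ℝ))) :=
        mul_le_mul_of_nonneg_left (sum_rpow_le m hm N) hW0
    _ ≤ W * ((m : ℝ) * (E : ℝ)) := by
        apply mul_le_mul_of_nonneg_left _ hW0
        exact mul_le_mul_of_nonneg_left hNEr hm0.le
    _ = (m : ℝ) * (E : ℝ) * W := by ring
end

section
/- Let m, n ∈ ℕ and let a be an n×n complex matrix with |a_{rs}| = 1 for all r,s and ∑_{k=1}^n a_{rk} conj(a_{sk}) = n·δ_{rs}. Define the m-linear form A(x^1,…,x^m) = ∑_{i_1,…,i_m=1}^n a_{i_1 i_2} a_{i_2 i_3} ⋯ a_{i_{m-1} i_m} x^1_{i_1} ⋯ x^m_{i_m}. Then for all vectors x^1,…,x^m ∈ ℂ^n with sup-norm ≤ 1, |A(x^1,…,x^m)| ≤ n^{(m+1)/2}. -/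
open scoped ComplexConjugate

section aux
variable {n : ℕ} (a : Fin n → Fin n → ℂ)

/-- recursive vector -/
noncomputable def myc : ℕ → (ℕ → Fin n → ℂ) → Fin n → ℂ
  | 0, x, j => x 0 j
  | (t+1), x, j => x 0 j * ∑ k, a j k * myc t (fun l => x (l+1)) k

@[simp] lemma myc_zero (x : ℕ → Fin n → ℂ) (j : Fin n) : myc a 0 x j = x 0 j := rfl

@[simp] lemma myc_succ (t : ℕ) (x : ℕ → Fin n → ℂ) (j : Fin n) :
    myc a (t+1) x j = x 0 j * ∑ k, a j k * myc a t (fun l => x (l+1)) k := rfl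

lemma key (t : ℕ) (x : ℕ → Fin n → ℂ) (b : Fin n → ℂ) :
    ∑ i : Fin (t+1) → Fin n,
      b (i 0) * ((∏ l : Fin t, a (i l.castSucc) (i l.succ)) *
        ∏ l : Fin (t+1), x l.val (i l))
    = ∑ j, b j * myc a t x j := by
  induction t generalizing x b with
  | zero =>
      rw [← (Equiv.funUnique (Fin 1) (Fin n)).symm.sum_comp]
      simp
  | succ t ih =>
      rw [← (Fin.consEquiv (fun _ : Fin (t+2) => Fin n)).sum_comp, Fintype.sum_prod_type]
      have hstep : ∀ j : Fin n, ∀ i' : Fin (t+1) → Fin n,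
          b ((Fin.cons j i' : Fin (t+2) → Fin n) 0) *
            ((∏ l : Fin (t+1), a ((Fin.cons j i' : Fin (t+2) → Fin n) l.castSucc)
                ((Fin.cons j i' : Fin (t+2) → Fin n) l.succ)) *
              ∏ l : Fin (t+2), x l.val ((Fin.cons j i' : Fin (t+2) → Fin n) l))
          = (b j * x 0 j) *
            ((fun k => a j k) (i' 0) * ((∏ l : Fin t, a (i' l.castSucc) (i' l.succ)) *
              ∏ l : Fin (t+1), (fun l' => x (l'+1)) l.val (i' l))) := by
        intro j i'
        rw [Fin.prod_univ_succ
          (fun l : Fin (t+1) => a ((Fin.cons j i' : Fin (t+2) → Fin n) l.castSucc)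
            ((Fin.cons j i' : Fin (t+2) → Fin n) l.succ)),
          Fin.prod_univ_succ
          (fun l : Fin (t+2) => x l.val ((Fin.cons j i' : Fin (t+2) → Fin n) l))]
        simp only [Fin.cons_zero, Fin.cons_succ, Fin.castSucc_zero, ← Fin.succ_castSucc,
          Fin.val_zero, Fin.val_succ]
        ring
      calc ∑ j, ∑ i' : Fin (t+1) → Fin n,
            b ((Fin.cons j i' : Fin (t+2) → Fin n) 0) *
            ((∏ l : Fin (t+1), a ((Fin.cons j i' : Fin (t+2) → Fin n) l.castSucc)
                ((Fin.cons j i' : Fin (t+2) → Fin n) l.succ)) *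
              ∏ l : Fin (t+2), x l.val ((Fin.cons j i' : Fin (t+2) → Fin n) l))
          = ∑ j, ∑ i' : Fin (t+1) → Fin n, (b j * x 0 j) *
            ((fun k => a j k) (i' 0) * ((∏ l : Fin t, a (i' l.castSucc) (i' l.succ)) *
              ∏ l : Fin (t+1), (fun l' => x (l'+1)) l.val (i' l))) := by
            exact Finset.sum_congr rfl fun j _ => Finset.sum_congr rfl fun i' _ => hstep j i'
        _ = ∑ j, (b j * x 0 j) * ∑ k, a j k * myc a t (fun l' => x (l'+1)) k := by
            refine Finset.sum_congr rfl fun j _ => ?_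
            rw [← Finset.mul_sum, ih (fun l' => x (l'+1)) (fun k => a j k)]
        _ = ∑ j, b j * myc a (t+1) x j := by
            refine Finset.sum_congr rfl fun j _ => ?_
            rw [myc_succ]; ring


lemma colorth (horth : ∀ r s : Fin n,
      ∑ k : Fin n, a r k * conj (a s k) = if r = s then (n : ℂ) else 0)
    (k k' : Fin n) :
    ∑ j : Fin n, conj (a j k) * a j k' = if k = k' then (n : ℂ) else 0 := by
  rcases Nat.eq_zero_or_pos n with h0 | h0
  · subst h0; exact absurd k.2 (by omega)
  have hM : (Matrix.of a) * (Matrix.of a).conjTranspose = (n : ℂ) • 1 := by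
    ext r s
    simp only [Matrix.mul_apply, Matrix.conjTranspose_apply, Matrix.smul_apply,
      Matrix.one_apply, Matrix.of_apply, RCLike.star_def, smul_eq_mul]
    rw [horth r s]
    split <;> simp
  have hn : (n : ℂ) ≠ 0 := Nat.cast_ne_zero.mpr (by omega)
  have h1 : (Matrix.of a) * ((n : ℂ)⁻¹ • (Matrix.of a).conjTranspose) = 1 := by
    rw [Matrix.mul_smul, hM, smul_smul, inv_mul_cancel₀ hn, one_smul]
  have h2 : ((n : ℂ)⁻¹ • (Matrix.of a).conjTranspose) * (Matrix.of a) = 1 :=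
    mul_eq_one_comm.mp h1
  have h3 : (Matrix.of a).conjTranspose * (Matrix.of a) = (n : ℂ) • 1 := by
    calc (Matrix.of a).conjTranspose * (Matrix.of a)
        = (n : ℂ) • (((n : ℂ)⁻¹ • (Matrix.of a).conjTranspose) * (Matrix.of a)) := by
          rw [Matrix.smul_mul, smul_smul, mul_inv_cancel₀ hn, one_smul]
      _ = (n : ℂ) • 1 := by rw [h2]
  have := congrFun (congrFun h3 k) k'
  simpa only [Matrix.mul_apply, Matrix.conjTranspose_apply, Matrix.smul_apply,
    Matrix.one_apply, Matrix.of_apply, RCLike.star_def, smul_eq_mul, mul_ite, mul_one,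
    mul_zero] using this

lemma avnorm (horth : ∀ r s : Fin n,
      ∑ k : Fin n, a r k * conj (a s k) = if r = s then (n : ℂ) else 0)
    (v : Fin n → ℂ) :
    ∑ j : Fin n, (Complex.normSq (∑ k, a j k * v k) : ℝ)
      = (n : ℝ) * ∑ k, (Complex.normSq (v k) : ℝ) := by
  have hC : ∑ j : Fin n, ((Complex.normSq (∑ k, a j k * v k) : ℝ) : ℂ)
      = (n : ℂ) * ∑ k, ((Complex.normSq (v k) : ℝ) : ℂ) := by
    calc ∑ j : Fin n, ((Complex.normSq (∑ k, a j k * v k) : ℝ) : ℂ)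
        = ∑ j : Fin n, (∑ k, a j k * v k) * conj (∑ k', a j k' * v k') := by
          refine Finset.sum_congr rfl fun j _ => ?_
          rw [Complex.mul_conj]
      _ = ∑ j : Fin n, ∑ k, ∑ k', (v k * conj (v k')) * (a j k * conj (a j k')) := by
          refine Finset.sum_congr rfl fun j _ => ?_
          rw [map_sum, Finset.sum_mul_sum]
          refine Finset.sum_congr rfl fun k _ => Finset.sum_congr rfl fun k' _ => ?_
          rw [map_mul]; ring
      _ = ∑ k, ∑ k', (v k * conj (v k')) * ∑ j : Fin n, (a j k * conj (a j k')) := by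
          rw [Finset.sum_comm]
          refine Finset.sum_congr rfl fun k _ => ?_
          rw [Finset.sum_comm]
          refine Finset.sum_congr rfl fun k' _ => ?_
          rw [Finset.mul_sum]
      _ = ∑ k, ∑ k', (v k * conj (v k')) * (if k' = k then (n : ℂ) else 0) := by
          refine Finset.sum_congr rfl fun k _ => Finset.sum_congr rfl fun k' _ => ?_
          congr 1
          rw [← colorth a horth k' k]
          exact Finset.sum_congr rfl fun j _ => by ring
      _ = ∑ k, (v k * conj (v k)) * (n : ℂ) := by
          refine Finset.sum_congr rfl fun k _ => ?_
          rw [Finset.sum_eq_single k]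
          · rw [if_pos rfl]
          · intro k' _ hk'; rw [if_neg hk', mul_zero]
          · intro h; exact absurd (Finset.mem_univ k) h
      _ = (n : ℂ) * ∑ k, ((Complex.normSq (v k) : ℝ) : ℂ) := by
          rw [Finset.mul_sum]
          refine Finset.sum_congr rfl fun k _ => ?_
          rw [Complex.mul_conj]; ring
  have := hC
  rw [← Complex.ofReal_sum] at this
  rw [show ((n : ℂ)) = ((n : ℝ) : ℂ) by push_cast; ring, ← Complex.ofReal_sum,
    ← Complex.ofReal_mul] at this
  exact_mod_cast this

lemma cnorm (horth : ∀ r s : Fin n,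
      ∑ k : Fin n, a r k * conj (a s k) = if r = s then (n : ℂ) else 0)
    (t : ℕ) (x : ℕ → Fin n → ℂ) (hx : ∀ l j, ‖x l j‖ ≤ 1) :
    ∑ j : Fin n, Complex.normSq (myc a t x j) ≤ (n : ℝ) ^ (t + 1) := by
  induction t generalizing x with
  | zero =>
      simp only [myc_zero]
      calc ∑ j : Fin n, Complex.normSq (x 0 j) ≤ ∑ _j : Fin n, (1 : ℝ) := by
            refine Finset.sum_le_sum fun j _ => ?_
            rw [← Complex.sq_norm]
            nlinarith [hx 0 j, norm_nonneg (x 0 j)]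
        _ = (n : ℝ) ^ (0 + 1) := by norm_num
  | succ t ih =>
      have hb : ∀ j, Complex.normSq (myc a (t+1) x j)
          ≤ Complex.normSq (∑ k, a j k * myc a t (fun l => x (l+1)) k) := by
        intro j
        rw [myc_succ, Complex.normSq_mul]
        have h1 : Complex.normSq (x 0 j) ≤ 1 := by
          rw [← Complex.sq_norm]
          nlinarith [hx 0 j, norm_nonneg (x 0 j)]
        nlinarith [Complex.normSq_nonneg (∑ k, a j k * myc a t (fun l => x (l+1)) k),
          Complex.normSq_nonneg (x 0 j)]
      calc ∑ j : Fin n, Complex.normSq (myc a (t+1) x j)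
          ≤ ∑ j : Fin n, Complex.normSq (∑ k, a j k * myc a t (fun l => x (l+1)) k) :=
            Finset.sum_le_sum fun j _ => hb j
        _ = (n : ℝ) * ∑ k, Complex.normSq (myc a t (fun l => x (l+1)) k) :=
            avnorm a horth _
        _ ≤ (n : ℝ) * (n : ℝ) ^ (t + 1) := by
            have := ih (fun l => x (l+1)) (fun l j => hx (l+1) j)
            have hn : (0 : ℝ) ≤ n := Nat.cast_nonneg n
            nlinarith
        _ = (n : ℝ) ^ (t + 2) := by ring

end aux

/-- Let `a` be an `n × n` complex matrix with unimodular entries and orthogonal rows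
(`∑_k a_{rk} conj(a_{sk}) = n δ_{rs}`). Then the `m`-linear form with coefficients
`a_{i₁ i₂} a_{i₂ i₃} ⋯ a_{i_{m-1} i_m}` satisfies `|A(x¹,…,xᵐ)| ≤ n^{(m+1)/2}` for all
vectors `x¹,…,xᵐ ∈ ℂⁿ` of sup-norm at most `1`. -/
theorem stmt5 (m n : ℕ) (hm : 2 ≤ m) (a : Fin n → Fin n → ℂ)
    (habs : ∀ r s : Fin n, ‖a r s‖ = 1)
    (horth : ∀ r s : Fin n,
      ∑ k : Fin n, a r k * conj (a s k) = if r = s then (n : ℂ) else 0)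
    (x : Fin m → Fin n → ℂ) (hx : ∀ (l : Fin m) (i : Fin n), ‖x l i‖ ≤ 1) :
    ‖∑ i : Fin m → Fin n,
        (∏ l : Fin (m - 1),
            a (i (l.castLE (Nat.sub_le m 1))) (i ⟨l.val + 1, by omega⟩)) *
          ∏ l : Fin m, x l (i l)‖
      ≤ (n : ℝ) ^ (((m : ℝ) + 1) / 2) := by
  obtain ⟨t, rfl⟩ : ∃ t, m = t + 1 := ⟨m - 1, by omega⟩
  set X : ℕ → Fin n → ℂ := fun l j => if h : l < t + 1 then x ⟨l, h⟩ j else 1 with hX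
  have hXle : ∀ l j, ‖X l j‖ ≤ 1 := by
    intro l j
    by_cases h : l < t + 1
    · simp only [hX, dif_pos h]; exact hx _ _
    · simp only [hX, dif_neg h, norm_one, le_refl]
  have hsum : (∑ i : Fin (t + 1) → Fin n,
        (∏ l : Fin (t + 1 - 1),
            a (i (l.castLE (Nat.sub_le (t + 1) 1))) (i ⟨l.val + 1, by omega⟩)) *
          ∏ l : Fin (t + 1), x l (i l))
      = ∑ j, myc a t X j := by
    have h1 := key a t X (fun _ => 1)
    simp only [one_mul] at h1
    rw [← h1]
    refine Finset.sum_congr rfl fun i _ => ?_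
    congr 1
    refine Finset.prod_congr rfl fun l _ => ?_
    simp [hX]
    intro h
    exact absurd l.isLt (by omega)
  rw [hsum]
  have habs1 : ‖∑ j, myc a t X j‖ ≤ ∑ j, ‖myc a t X j‖ :=
    norm_sum_le _ _
  have hcs : (∑ j, ‖myc a t X j‖) ^ 2
      ≤ (n : ℝ) * ∑ j, Complex.normSq (myc a t X j) := by
    have := Finset.sum_mul_sq_le_sq_mul_sq Finset.univ (fun _ : Fin n => (1 : ℝ))
      (fun j => ‖myc a t X j‖)
    simp only [one_mul, one_pow, Complex.sq_norm] at this
    simpa using this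
  have hn2 : (∑ j, Complex.normSq (myc a t X j)) ≤ (n : ℝ) ^ (t + 1) :=
    cnorm a horth t X hXle
  have hsq : (‖∑ j, myc a t X j‖) ^ 2 ≤ (n : ℝ) ^ (t + 2) := by
    have h0 : (0 : ℝ) ≤ ∑ j, ‖myc a t X j‖ :=
      Finset.sum_nonneg fun j _ => norm_nonneg _
    have hn : (0 : ℝ) ≤ (n : ℝ) := Nat.cast_nonneg n
    calc (‖∑ j, myc a t X j‖) ^ 2
        ≤ (∑ j, ‖myc a t X j‖) ^ 2 := by nlinarith [norm_nonneg (∑ j, myc a t X j)]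
      _ ≤ (n : ℝ) * ∑ j, Complex.normSq (myc a t X j) := hcs
      _ ≤ (n : ℝ) * (n : ℝ) ^ (t + 1) := by nlinarith
      _ = (n : ℝ) ^ (t + 2) := by ring
  have hfin : ‖∑ j, myc a t X j‖ ≤ Real.sqrt ((n : ℝ) ^ (t + 2)) := by
    rw [Real.le_sqrt (norm_nonneg _)]
    · exact hsq
    · positivity
  refine hfin.trans_eq ?_
  rw [Real.sqrt_eq_rpow, ← Real.rpow_natCast (n : ℝ) (t + 2),
    ← Real.rpow_mul (Nat.cast_nonneg n)]
  congr 1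
  push_cast
  ring
end

section
/- Let X be a symmetric Banach sequence space (over finite index sets) and m ∈ ℕ such that there exists C ≥ 1 with ‖(a_i)_{i∈M(m,n)}‖_X ≤ C ‖a‖_∞ for every n and every complex matrix a indexed by M(m,n) = {1,…,n}^m, where ‖a‖_∞ is the supremum of |∑ a_i x^1_{i_1}⋯x^m_{i_m}| over all choice of vectors of sup-norm ≤ 1. Then the fundamental function φ_X(n) = ‖∑_{i=1}^n e_i‖_X satisfies φ_X(n) ≤ C(m) n^{(m+1)/(2m)} for some constant C(m) depending only on m and C. -/
open Finset Complex

noncomputable def th (t : ℕ) (d : ℤ) : ℂ := Complex.exp (2 * Real.pi * Complex.I * d / t)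

lemma th_zero (t : ℕ) : th t 0 = 1 := by simp [th]

lemma abs_th (t : ℕ) (d : ℤ) : ‖th t d‖ = 1 := by
  rw [th]
  have : 2 * Real.pi * Complex.I * d / t = ((2 * Real.pi * d / t : ℝ) : ℂ) * Complex.I := by
    push_cast; ring
  rw [this, Complex.norm_exp_ofReal_mul_I]

lemma th_add (t : ℕ) (d e : ℤ) : th t (d + e) = th t d * th t e := by
  rw [th, th, th, ← Complex.exp_add]; congr 1; push_cast; ring

lemma th_pow (t : ℕ) (d : ℤ) (k : ℕ) : th t d ^ k = th t (d * k) := by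
  rw [th, th, ← Complex.exp_nat_mul]; congr 1; push_cast; ring

lemma th_mul_t (t : ℕ) (ht : t ≠ 0) (n : ℤ) : th t (n * t) = 1 := by
  rw [th]
  have ht' : (t : ℂ) ≠ 0 := Nat.cast_ne_zero.mpr ht
  have h : 2 * Real.pi * Complex.I * ((n * t : ℤ) : ℂ) / t = n * (2 * Real.pi * Complex.I) := by
    push_cast
    field_simp
  rw [h, Complex.exp_int_mul_two_pi_mul_I]

lemma th_eq_one_iff (t : ℕ) (ht : t ≠ 0) (d : ℤ) : th t d = 1 ↔ (t : ℤ) ∣ d := by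
  constructor
  · intro h
    rw [th, Complex.exp_eq_one_iff] at h
    obtain ⟨n, hn⟩ := h
    refine ⟨n, ?_⟩
    have ht' : (t : ℂ) ≠ 0 := Nat.cast_ne_zero.mpr ht
    have h2 : (2 * Real.pi * Complex.I) ≠ 0 := by
      simp [Real.pi_ne_zero, Complex.I_ne_zero]
    have hd : (d : ℂ) = n * t := by
      field_simp at hn
      have h3 : (2 * Real.pi * Complex.I) * (d : ℂ) = (2 * Real.pi * Complex.I) * ((n : ℂ) * t) := by
        linear_combination (2 * Real.pi * Complex.I) * hn
      exact mul_left_cancel₀ h2 h3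
    have : d = n * t := by exact_mod_cast hd
    rw [this]; ring
  · rintro ⟨n, rfl⟩
    rw [mul_comm]
    exact th_mul_t t ht n

lemma conj_th (t : ℕ) (d : ℤ) : (starRingEnd ℂ) (th t d) = th t (-d) := by
  rw [th, th, ← Complex.exp_conj]
  congr 1
  simp only [map_div₀, map_mul, Complex.conj_I, map_ofNat, Complex.conj_ofReal]
  push_cast
  simp [Complex.conj_ofReal]

lemma th_orth (t : ℕ) (ht : t ≠ 0) (j k : Fin t) :
    ∑ l : Fin t, th t (((j : ℤ) - k) * l) = if j = k then (t : ℂ) else 0 := by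
  rcases eq_or_ne j k with h | h
  · simp [h, th_zero]
  · simp only [h, if_false]
    have hη : th t ((j : ℤ) - k) ≠ 1 := by
      intro h1
      obtain hdvd := (th_eq_one_iff t ht _).mp h1
      have h0 : (j : ℤ) - k = 0 := Int.eq_zero_of_abs_lt_dvd hdvd (by
        have hj := j.isLt; have hk := k.isLt
        rw [abs_lt]; omega)
      exact h (Fin.ext (by omega))
    calc ∑ l : Fin t, th t (((j : ℤ) - k) * l)
        = ∑ l : Fin t, th t ((j:ℤ) - k) ^ (l : ℕ) :=
          Finset.sum_congr rfl fun l _ => (th_pow t _ _).symm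
      _ = ∑ l ∈ Finset.range t, th t ((j:ℤ) - k) ^ l :=
          Fin.sum_univ_eq_sum_range (fun l => th t ((j:ℤ) - k) ^ l) t
      _ = 0 := by
          rw [geom_sum_eq hη, th_pow,
            (th_eq_one_iff t ht _).mpr ⟨(j:ℤ)-k, by ring⟩, sub_self, zero_div]

noncomputable def Ftr (t : ℕ) (v : Fin t → ℂ) (k : Fin t) : ℂ :=
  ∑ j : Fin t, th t ((j : ℤ) * k) * v j

lemma parseval (t : ℕ) (ht : t ≠ 0) (v : Fin t → ℂ) :
    ∑ k : Fin t, Complex.normSq (Ftr t v k) = t * ∑ j : Fin t, Complex.normSq (v j) := by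
  have key : ∑ k : Fin t, (Ftr t v k * (starRingEnd ℂ) (Ftr t v k))
      = (t : ℂ) * ∑ j : Fin t, (v j * (starRingEnd ℂ) (v j)) := by
    have expand : ∀ k : Fin t, Ftr t v k * (starRingEnd ℂ) (Ftr t v k)
        = ∑ j : Fin t, ∑ j' : Fin t,
            (v j * (starRingEnd ℂ) (v j')) * th t (((j:ℤ) - j') * k) := by
      intro k
      rw [Ftr, map_sum, Finset.sum_mul_sum]
      refine Finset.sum_congr rfl fun j _ => Finset.sum_congr rfl fun j' _ => ?_
      rw [map_mul, conj_th]
      have : th t ((j:ℤ) * k) * th t (-((j':ℤ) * k)) = th t (((j:ℤ) - j') * k) := by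
        rw [← th_add]; congr 1; ring
      linear_combination (v j * (starRingEnd ℂ) (v j')) * this
    calc ∑ k : Fin t, (Ftr t v k * (starRingEnd ℂ) (Ftr t v k))
        = ∑ j : Fin t, ∑ j' : Fin t, (v j * (starRingEnd ℂ) (v j'))
            * ∑ k : Fin t, th t (((j:ℤ) - j') * k) := by
          rw [Finset.sum_congr rfl fun k _ => expand k, Finset.sum_comm]
          refine Finset.sum_congr rfl fun j _ => ?_
          rw [Finset.sum_comm]
          exact Finset.sum_congr rfl fun j' _ => (Finset.mul_sum _ _ _).symm
      _ = (t : ℂ) * ∑ j : Fin t, (v j * (starRingEnd ℂ) (v j)) := by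
          rw [Finset.mul_sum]
          refine Finset.sum_congr rfl fun j _ => ?_
          rw [Finset.sum_congr rfl fun j' (_ : j' ∈ Finset.univ) => by rw [th_orth t ht j j']]
          simp only [mul_ite, mul_zero, Finset.sum_ite_eq, Finset.mem_univ, if_true]
          ring
  simp only [Complex.mul_conj] at key
  exact_mod_cast key

noncomputable def Bform (t : ℕ) : (M : ℕ) → (Fin t → ℂ) → (Fin M → Fin t → ℂ) → ℂ
  | 0, v, _ => ∑ j : Fin t, v j
  | (M+1), v, w => Bform t M (fun k => w 0 k * Ftr t v k) (fun l => w l.succ)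

lemma bform_bound (t : ℕ) (ht : t ≠ 0) :
    ∀ (M : ℕ) (v : Fin t → ℂ) (w : Fin M → Fin t → ℂ),
      (∀ l i, ‖w l i‖ ≤ 1) →
      ‖Bform t M v w‖ ≤
        Real.sqrt t ^ (M + 1) * Real.sqrt (∑ j : Fin t, Complex.normSq (v j)) := by
  intro M
  induction M with
  | zero =>
    intro v w _
    rw [Bform, pow_one]
    have h1 : ‖∑ j : Fin t, v j‖ ≤ ∑ j : Fin t, ‖v j‖ :=
      norm_sum_le _ _
    have h2 : (∑ j : Fin t, ‖v j‖) ^ 2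
        ≤ (t : ℝ) * ∑ j : Fin t, ‖v j‖ ^ 2 := by
      have := sq_sum_le_card_mul_sum_sq (s := (Finset.univ : Finset (Fin t)))
        (f := fun j => ‖v j‖)
      simpa using this
    have h3 : (∑ j : Fin t, ‖v j‖)
        ≤ Real.sqrt ((t : ℝ) * ∑ j : Fin t, Complex.normSq (v j)) := by
      rw [show (∑ j : Fin t, Complex.normSq (v j)) = ∑ j : Fin t, ‖v j‖ ^ 2 from
        Finset.sum_congr rfl fun j _ => Complex.normSq_eq_norm_sq _]
      exact (Real.le_sqrt (by positivity) (by positivity)).mpr h2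
    calc ‖∑ j : Fin t, v j‖ ≤ ∑ j : Fin t, ‖v j‖ := h1
      _ ≤ Real.sqrt ((t : ℝ) * ∑ j : Fin t, Complex.normSq (v j)) := h3
      _ = Real.sqrt t * Real.sqrt (∑ j : Fin t, Complex.normSq (v j)) :=
          Real.sqrt_mul (Nat.cast_nonneg t) _
  | succ M ih =>
    intro v w hw
    rw [Bform]
    refine le_trans (ih _ _ fun l i => hw l.succ i) ?_
    have h1 : ∑ k : Fin t, Complex.normSq (w 0 k * Ftr t v k)
        ≤ ∑ k : Fin t, Complex.normSq (Ftr t v k) := by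
      refine Finset.sum_le_sum fun k _ => ?_
      rw [Complex.normSq_mul]
      have h2 : Complex.normSq (w 0 k) ≤ 1 := by
        rw [Complex.normSq_eq_norm_sq]
        exact pow_le_one₀ (norm_nonneg _) (hw 0 k) |>.trans le_rfl
      have := Complex.normSq_nonneg (Ftr t v k)
      nlinarith
    have h3 : Real.sqrt (∑ k : Fin t, Complex.normSq (w 0 k * Ftr t v k))
        ≤ Real.sqrt t * Real.sqrt (∑ j : Fin t, Complex.normSq (v j)) := by
      rw [← Real.sqrt_mul (Nat.cast_nonneg t)]
      exact Real.sqrt_le_sqrt (h1.trans (le_of_eq (parseval t ht v)))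
    calc Real.sqrt t ^ (M + 1) * Real.sqrt (∑ k : Fin t, Complex.normSq (w 0 k * Ftr t v k))
        ≤ Real.sqrt t ^ (M + 1) * (Real.sqrt t * Real.sqrt (∑ j : Fin t, Complex.normSq (v j))) := by
          exact mul_le_mul_of_nonneg_left h3 (by positivity)
      _ = Real.sqrt t ^ (M + 1 + 1) * Real.sqrt (∑ j : Fin t, Complex.normSq (v j)) := by ring

noncomputable def chain (t M : ℕ) (i : Fin (M + 1) → Fin t) : ℂ :=
  ∏ s : Fin M, th t ((i s.castSucc : ℤ) * (i s.succ : ℕ))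

lemma abs_chain (t M : ℕ) (i : Fin (M + 1) → Fin t) : ‖chain t M i‖ = 1 := by
  rw [chain, norm_prod]
  exact Finset.prod_eq_one fun s _ => abs_th t _

lemma sum_eq_bform (t : ℕ) :
    ∀ (M : ℕ) (v : Fin t → ℂ) (w : Fin M → Fin t → ℂ),
      ∑ i : Fin (M + 1) → Fin t,
        chain t M i * (v (i 0) * ∏ l : Fin M, w l (i l.succ)) = Bform t M v w := by
  intro M
  induction M with
  | zero =>
    intro v w
    rw [Bform]
    rw [← (Equiv.funUnique (Fin 1) (Fin t)).symm.sum_comp]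
    simp [chain]
  | succ M ih =>
    intro v w
    rw [Bform, ← ih]
    rw [← (Fin.consEquiv (fun _ : Fin (M + 2) => Fin t)).sum_comp, Fintype.sum_prod_type]
    rw [Finset.sum_comm]
    refine Finset.sum_congr rfl fun i' _ => ?_
    have hchain : ∀ j : Fin t, chain t (M + 1) ((Fin.cons (α := fun _ : Fin (M+2) => Fin t) j i'))
        = th t ((j : ℤ) * (i' 0 : ℕ)) * chain t M i' := by
      intro j
      rw [chain, chain, Fin.prod_univ_succ]
      congr 1
    have hprod : ∀ j : Fin t, (∏ l : Fin (M + 1), w l ((Fin.cons (α := fun _ : Fin (M+2) => Fin t) j i') l.succ))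
        = w 0 (i' 0) * ∏ l : Fin M, w l.succ (i' l.succ) := by
      intro j
      rw [Fin.prod_univ_succ]
      simp [Fin.cons_succ]
    calc ∑ j : Fin t, chain t (M + 1) ((Fin.cons (α := fun _ : Fin (M+2) => Fin t) j i'))
          * (v ((Fin.cons (α := fun _ : Fin (M+2) => Fin t) j i') 0) * ∏ l : Fin (M + 1), w l ((Fin.cons (α := fun _ : Fin (M+2) => Fin t) j i') l.succ))
        = ∑ j : Fin t, chain t M i'
            * ((w 0 (i' 0) * (th t ((j : ℤ) * (i' 0 : ℕ)) * v j))
               * ∏ l : Fin M, w l.succ (i' l.succ)) := by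
          refine Finset.sum_congr rfl fun j _ => ?_
          rw [hchain j, hprod j, Fin.cons_zero]
          ring
      _ = chain t M i' * ((w 0 (i' 0) * Ftr t v (i' 0)) * ∏ l : Fin M, w l.succ (i' l.succ)) := by
          rw [Ftr, Finset.mul_sum, Finset.sum_mul, Finset.mul_sum]
      _ = chain t M i' * ((fun k => w 0 k * Ftr t v k) (i' 0)
            * ∏ l : Fin M, (fun l => w l.succ) l (i' l.succ)) := rfl

/-- Let `ν` be (the norm of) a symmetric Banach sequence space: invariant under
permutations, depending only on moduli, and lattice-monotone. If there is `C ≥ 1` such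
that for every `n` and every matrix `a` indexed by `M(m,n) = {1,…,n}^m` (viewed inside
the sequence space via any injective enumeration) one has `ν(a) ≤ C‖a‖_∞`, where `‖a‖_∞`
is the multilinear sup-norm on the polydisc, then the fundamental function
`φ(n) = ν(χ_{1,…,n})` satisfies `φ(n) ≤ K n^{(m+1)/(2m)}` for some constant `K`. -/
theorem stmt6 (m : ℕ) (hm : 1 ≤ m) (ν : (ℕ → ℂ) → ℝ) (C : ℝ) (hC : 1 ≤ C)
    (hperm : ∀ (x : ℕ → ℂ) (σ : Equiv.Perm ℕ), ν (x ∘ σ) = ν x)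
    (habs : ∀ x y : ℕ → ℂ, (∀ i, ‖x i‖ = ‖y i‖) → ν x = ν y)
    (hmono : ∀ x y : ℕ → ℂ, (∀ i, ‖x i‖ ≤ ‖y i‖) → ν x ≤ ν y)
    (hBH : ∀ (n : ℕ) (a : (Fin m → Fin n) → ℂ) (e : (Fin m → Fin n) → ℕ),
      Function.Injective e →
      ∀ D : ℝ,
        (∀ x : Fin m → Fin n → ℂ, (∀ (l : Fin m) (i : Fin n), ‖x l i‖ ≤ 1) →
          ‖∑ i : Fin m → Fin n, a i * ∏ l : Fin m, x l (i l)‖ ≤ D) →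
        ν (Function.extend e a fun _ => 0) ≤ C * D) :
    ∃ K : ℝ, 0 < K ∧
      ∀ n : ℕ, ν (fun j => if j < n then 1 else 0) ≤ K * (n : ℝ) ^ (((m : ℝ) + 1) / (2 * m)) := by
  obtain ⟨M, rfl⟩ : ∃ M, m = M + 1 := ⟨m - 1, by omega⟩
  have hC0 : (0:ℝ) < C := lt_of_lt_of_le one_pos hC
  -- main estimate for powers
  have main : ∀ t : ℕ, t ≠ 0 →
      ν (fun j => if j < t ^ (M + 1) then 1 else 0) ≤ C * Real.sqrt t ^ (M + 2) := by
    intro t ht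
    set a : (Fin (M + 1) → Fin t) → ℂ := fun i => chain t M i with ha
    set e : (Fin (M + 1) → Fin t) → ℕ :=
      fun i => ((finFunctionFinEquiv i : Fin (t ^ (M+1))) : ℕ) with he
    have hinj : Function.Injective e :=
      fun i i' h => finFunctionFinEquiv.injective (Fin.val_injective h)
    have heq : ν (fun j => if j < t ^ (M+1) then 1 else 0)
        = ν (Function.extend e a fun _ => 0) := by
      apply habs
      intro j
      by_cases hj : j < t ^ (M + 1)
      · have hej : e (finFunctionFinEquiv.symm ⟨j, hj⟩) = j := by
          show ((finFunctionFinEquiv (finFunctionFinEquiv.symm ⟨j, hj⟩) : Fin (t ^ (M+1))) : ℕ) = j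
          rw [Equiv.apply_symm_apply]
        have h1 : Function.extend e a (fun _ => 0) j
            = a (finFunctionFinEquiv.symm ⟨j, hj⟩) := by
          conv_lhs => rw [← hej]
          rw [hinj.extend_apply]
        rw [h1, if_pos hj, ha]
        simp [abs_chain]
      · have hne : ¬∃ i, e i = j := by
          rintro ⟨i, hi⟩
          rw [← hi] at hj
          exact hj (finFunctionFinEquiv i).isLt
        rw [Function.extend_apply' _ _ _ hne, if_neg hj]
    rw [heq]
    apply hBH t a e hinj
    intro x hx
    have hrw : ∑ i : Fin (M+1) → Fin t, a i * ∏ l : Fin (M+1), x l (i l)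
        = Bform t M (x 0) (fun l => x l.succ) := by
      rw [← sum_eq_bform t M (x 0) (fun l => x l.succ)]
      refine Finset.sum_congr rfl fun i _ => ?_
      rw [ha, Fin.prod_univ_succ]
    rw [hrw]
    refine le_trans (bform_bound t ht M (x 0) (fun l => x l.succ) fun l i => hx l.succ i) ?_
    have hsum : ∑ j : Fin t, Complex.normSq (x 0 j) ≤ (t : ℝ) := by
      calc ∑ j : Fin t, Complex.normSq (x 0 j) ≤ ∑ _j : Fin t, (1:ℝ) := by
            refine Finset.sum_le_sum fun j _ => ?_
            rw [Complex.normSq_eq_norm_sq]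
            exact pow_le_one₀ (norm_nonneg _) (hx 0 j)
        _ = (t : ℝ) := by simp
    calc Real.sqrt t ^ (M + 1) * Real.sqrt (∑ j : Fin t, Complex.normSq (x 0 j))
        ≤ Real.sqrt t ^ (M + 1) * Real.sqrt t :=
          mul_le_mul_of_nonneg_left (by simpa using Real.sqrt_le_sqrt hsum) (by positivity)
      _ = Real.sqrt t ^ (M + 2) := by ring
  -- the constant
  refine ⟨C * 2 ^ (((M:ℝ) + 2) / 2), by positivity, ?_⟩
  intro N
  have hexp : (((M+1 : ℕ) : ℝ) + 1) / (2 * ((M+1 : ℕ) : ℝ)) = ((M:ℝ) + 2) / (2 * ((M:ℝ) + 1)) := by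
    push_cast; ring_nf
  rcases Nat.eq_zero_or_pos N with rfl | hN
  · -- N = 0
    have hzero : ν (fun j => if j < 0 then 1 else 0) ≤ 0 := by
      have hae : ∀ i : Fin (M+1) → Fin 0, False := fun i => (i 0).elim0
      have hinj : Function.Injective (fun _ : Fin (M+1) → Fin 0 => (0:ℕ)) :=
        fun i => absurd (hae i) not_false
      have hD : ∀ x : Fin (M+1) → Fin 0 → ℂ,
          (∀ (l : Fin (M+1)) (i : Fin 0), ‖x l i‖ ≤ 1) →
          ‖∑ i : Fin (M+1) → Fin 0,
            (fun _ => (0:ℂ)) i * ∏ l : Fin (M+1), x l (i l)‖ ≤ 0 := by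
        intro x _
        haveI : IsEmpty (Fin (M+1) → Fin 0) := ⟨hae⟩
        rw [Finset.univ_eq_empty, Finset.sum_empty, norm_zero]
      have h0 := hBH 0 (fun _ => (0:ℂ)) (fun _ => (0:ℕ)) hinj 0 hD
      rw [mul_zero] at h0
      refine le_trans (le_of_eq (habs _ _ ?_)) h0
      intro j
      rw [Function.extend_apply' _ _ _ (fun ⟨i, _⟩ => hae i)]
      simp
    rw [Nat.cast_zero, Real.zero_rpow (by positivity), mul_zero]
    exact hzero
  · -- N ≥ 1
    set x : ℝ := (N:ℝ) ^ ((1 : ℝ) / ((M:ℝ) + 1)) with hxdef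
    have hN1 : (1:ℝ) ≤ (N:ℝ) := by exact_mod_cast hN
    have hx1 : 1 ≤ x := Real.one_le_rpow hN1 (by positivity)
    set t : ℕ := ⌈x⌉₊ with htdef
    have ht0 : t ≠ 0 := by
      have : 0 < t := Nat.ceil_pos.mpr (lt_of_lt_of_le one_pos hx1)
      omega
    have hxt : x ≤ (t:ℝ) := Nat.le_ceil x
    have htx : (t : ℝ) ≤ 2 * x := by
      have := (Nat.ceil_lt_add_one (le_trans zero_le_one hx1)).le
      linarith
    have hNt : N ≤ t ^ (M + 1) := by
      have hNr : (N:ℝ) = x ^ (M+1) := by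
        rw [hxdef, ← Real.rpow_natCast ((N:ℝ) ^ ((1:ℝ)/((M:ℝ)+1))) (M+1),
          ← Real.rpow_mul (Nat.cast_nonneg N)]
        rw [show (1:ℝ)/((M:ℝ)+1) * ((M+1 : ℕ):ℝ) = 1 by push_cast; field_simp]
        rw [Real.rpow_one]
      have : (N:ℝ) ≤ (t:ℝ) ^ (M+1) := by
        rw [hNr]
        exact pow_le_pow_left₀ (by positivity) hxt _
      exact_mod_cast this
    have hmono1 : ν (fun j => if j < N then 1 else 0)
        ≤ ν (fun j => if j < t ^ (M+1) then 1 else 0) := by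
      apply hmono
      intro j
      by_cases hj : j < N
      · rw [if_pos hj, if_pos (lt_of_lt_of_le hj hNt)]
      · rw [if_neg hj]
        simp only [norm_zero]
        positivity
    refine le_trans hmono1 (le_trans (main t ht0) ?_)
    -- now bound C * sqrt t ^ (M+2)
    have hsq : Real.sqrt t ^ (M + 2) = (t:ℝ) ^ (((M:ℝ) + 2) / 2) := by
      rw [Real.sqrt_eq_rpow, ← Real.rpow_natCast ((t:ℝ) ^ ((1:ℝ)/2)) (M+2),
        ← Real.rpow_mul (Nat.cast_nonneg t)]
      congr 1
      push_cast; ring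
    have hstep : (t:ℝ) ^ (((M:ℝ) + 2) / 2) ≤ (2 * x) ^ (((M:ℝ) + 2) / 2) :=
      Real.rpow_le_rpow (Nat.cast_nonneg t) htx (by positivity)
    have hx0 : (0:ℝ) ≤ x := le_trans zero_le_one hx1
    have hmulr : (2 * x) ^ (((M:ℝ) + 2) / 2)
        = 2 ^ (((M:ℝ) + 2) / 2) * x ^ (((M:ℝ) + 2) / 2) :=
      Real.mul_rpow (by norm_num) hx0
    have hxN : x ^ (((M:ℝ) + 2) / 2) = (N:ℝ) ^ ((((M+1 : ℕ):ℝ) + 1) / (2 * ((M+1 : ℕ):ℝ))) := by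
      rw [hxdef, ← Real.rpow_mul (Nat.cast_nonneg N), hexp]
      congr 1
      rw [div_mul_div_comm, one_mul, mul_comm ((M:ℝ)+1) 2]
    calc C * Real.sqrt t ^ (M + 2)
        = C * (t:ℝ) ^ (((M:ℝ) + 2) / 2) := by rw [hsq]
      _ ≤ C * (2 ^ (((M:ℝ) + 2) / 2) * x ^ (((M:ℝ) + 2) / 2)) := by
          rw [← hmulr]
          exact mul_le_mul_of_nonneg_left hstep (le_of_lt hC0)
      _ = C * 2 ^ (((M:ℝ) + 2) / 2)
          * (N:ℝ) ^ ((((M+1 : ℕ):ℝ) + 1) / (2 * ((M+1 : ℕ):ℝ))) := by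
          rw [hxN]; ring
end

section
/- For every finite index set I with card(I) = n ≥ 2 and every 1 ≤ p < ∞, the identity map from ℓ_p(I) to ℓ_{p,1}(I) has norm at most C·log(n) for a universal constant C independent of n, p, and I. -/
/-- The Lorentz `ℓ_{p,1}` norm of a finite family: `∑_k x*_k (k^{1/p} - (k-1)^{1/p})`. -/
noncomputable def lorentzNorm {ι : Type*} [Fintype ι] (p : ℝ) (x : ι → ℂ) : ℝ :=
  ∑ k ∈ Finset.range (Fintype.card ι),
    rearrF x k * (((k : ℝ) + 1) ^ (1 / p) - (k : ℝ) ^ (1 / p))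

/-- The key Chebyshev-type bound: `x*_k ≤ ‖x‖_p / (k+1)^{1/p}`. -/
lemma rearrF_le {ι : Type*} [Fintype ι] (x : ι → ℂ) {p : ℝ} (hp : 1 ≤ p) (k : ℕ) :
    rearrF x k ≤ (∑ i : ι, ‖x i‖ ^ p) ^ (1 / p) / ((k : ℝ) + 1) ^ (1 / p) := by
  set S : ℝ := ∑ i : ι, ‖x i‖ ^ p with hSdef
  have hp0 : (0:ℝ) < p := lt_of_lt_of_le one_pos hp
  have hS : 0 ≤ S := Finset.sum_nonneg fun i _ => Real.rpow_nonneg (norm_nonneg _) _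
  have hk1 : (0:ℝ) < (k : ℝ) + 1 := by positivity
  set l : ℝ := S ^ (1 / p) / ((k : ℝ) + 1) ^ (1 / p) with hldef
  have hl0 : 0 ≤ l := by positivity
  have hlp : l ^ p = S / ((k : ℝ) + 1) := by
    rw [hldef, Real.div_rpow (Real.rpow_nonneg hS _) (Real.rpow_nonneg hk1.le _),
      ← Real.rpow_mul hS, ← Real.rpow_mul hk1.le, one_div_mul_cancel hp0.ne',
      Real.rpow_one, Real.rpow_one]
  apply csInf_le ⟨0, fun y hy => hy.1⟩
  refine ⟨hl0, ?_⟩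
  by_contra hcard
  push_neg at hcard
  classical
  set T : Finset ι := Finset.univ.filter (fun i => l < ‖x i‖) with hT
  have hTc : k + 1 ≤ T.card := by
    have : Nat.card {i : ι // l < ‖x i‖} = T.card := by
      rw [Nat.card_eq_fintype_card, Fintype.card_subtype]
    omega
  have hTne : T.Nonempty := Finset.card_pos.mp (by omega)
  have h1 : ∑ i ∈ T, l ^ p < ∑ i ∈ T, ‖x i‖ ^ p := by
    refine Finset.sum_lt_sum_of_nonempty hTne fun i hi => ?_
    exact Real.rpow_lt_rpow hl0 (Finset.mem_filter.mp hi).2 hp0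
  have h2 : ∑ i ∈ T, ‖x i‖ ^ p ≤ S := by
    refine Finset.sum_le_sum_of_subset_of_nonneg (Finset.subset_univ T) fun i _ _ => ?_
    exact Real.rpow_nonneg (norm_nonneg _) _
  have h3 : S ≤ ∑ i ∈ T, l ^ p := by
    rw [Finset.sum_const, nsmul_eq_mul, hlp]
    have hlpn : 0 ≤ S / ((k : ℝ) + 1) := by positivity
    calc S = ((k : ℝ) + 1) * (S / ((k : ℝ) + 1)) := by field_simp
    _ ≤ (T.card : ℝ) * (S / ((k : ℝ) + 1)) := by
        apply mul_le_mul_of_nonneg_right _ hlpn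
        exact_mod_cast hTc
  linarith

/-- `(k+1)^a - k^a ≤ (k+1)^a / (k+1)` for `0 < a ≤ 1`. -/
lemma diff_le {a : ℝ} (ha0 : 0 < a) (ha1 : a ≤ 1) (k : ℕ) :
    ((k : ℝ) + 1) ^ a - (k : ℝ) ^ a ≤ ((k : ℝ) + 1) ^ a / ((k : ℝ) + 1) := by
  rcases Nat.eq_zero_or_pos k with rfl | hk
  · simp [Real.zero_rpow ha0.ne', Real.one_rpow]
  · have hk0 : (0:ℝ) < (k : ℝ) := by exact_mod_cast hk
    have hk1 : (0:ℝ) < (k : ℝ) + 1 := by positivity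
    have hx1 : (1:ℝ) ≤ ((k : ℝ) + 1) / (k : ℝ) := by
      rw [le_div_iff₀ hk0]; linarith
    have key : (((k : ℝ) + 1) / (k : ℝ)) ^ a ≤ (((k : ℝ) + 1) / (k : ℝ)) ^ (1:ℝ) :=
      Real.rpow_le_rpow_of_exponent_le hx1 ha1
    rw [Real.rpow_one, Real.div_rpow hk1.le hk0.le] at key
    have hka : (0:ℝ) < (k : ℝ) ^ a := Real.rpow_pos_of_pos hk0 _
    rw [div_le_div_iff₀ hka hk0] at key
    -- key : (k+1)^a * k ≤ (k+1) * k^a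
    rw [sub_le_iff_le_add, div_add' _ _ _ hk1.ne']
    rw [le_div_iff₀ hk1]
    ring_nf
    ring_nf at key
    nlinarith [Real.rpow_pos_of_pos hk1 a]

/-- There is a universal constant `C > 0` such that for every finite index set `I` of
cardinality `n ≥ 2` and every `1 ≤ p < ∞`, the identity `ℓ_p(I) → ℓ_{p,1}(I)` has norm
at most `C log n`: `‖x‖_{ℓ_{p,1}} ≤ C log n · ‖x‖_{ℓ_p}`. -/
theorem stmt8 :
    ∃ C : ℝ, 0 < C ∧
      ∀ (n : ℕ), 2 ≤ n →
      ∀ (p : ℝ), 1 ≤ p →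
      ∀ (ι : Type) (_ : Fintype ι), Fintype.card ι = n →
      ∀ x : ι → ℂ,
        lorentzNorm p x ≤ C * Real.log n * (∑ i : ι, ‖x i‖ ^ p) ^ (1 / p) := by
  refine ⟨3, by norm_num, fun n hn p hp ι _ hcard x => ?_⟩
  have hp0 : (0:ℝ) < p := lt_of_lt_of_le one_pos hp
  have ha0 : (0:ℝ) < 1 / p := by positivity
  have ha1 : 1 / p ≤ 1 := by
    rw [div_le_one hp0]; exact hp
  set S : ℝ := ∑ i : ι, ‖x i‖ ^ p with hSdef
  have hS : 0 ≤ S := Finset.sum_nonneg fun i _ => Real.rpow_nonneg (norm_nonneg _) _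
  have hSp : 0 ≤ S ^ (1 / p) := Real.rpow_nonneg hS _
  -- termwise bound
  have hterm : ∀ k : ℕ,
      rearrF x k * (((k : ℝ) + 1) ^ (1 / p) - (k : ℝ) ^ (1 / p))
        ≤ S ^ (1 / p) * (1 / ((k : ℝ) + 1)) := by
    intro k
    have hk1 : (0:ℝ) < (k : ℝ) + 1 := by positivity
    have hd0 : 0 ≤ ((k : ℝ) + 1) ^ (1 / p) - (k : ℝ) ^ (1 / p) := by
      have := Real.rpow_le_rpow (by positivity : (0:ℝ) ≤ (k:ℝ)) (by linarith : (k:ℝ) ≤ (k:ℝ)+1)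
        ha0.le
      linarith
    calc rearrF x k * (((k : ℝ) + 1) ^ (1 / p) - (k : ℝ) ^ (1 / p))
        ≤ (S ^ (1 / p) / ((k : ℝ) + 1) ^ (1 / p)) *
            (((k : ℝ) + 1) ^ (1 / p) - (k : ℝ) ^ (1 / p)) :=
          mul_le_mul_of_nonneg_right (rearrF_le x hp k) hd0
      _ ≤ (S ^ (1 / p) / ((k : ℝ) + 1) ^ (1 / p)) * (((k : ℝ) + 1) ^ (1 / p) / ((k : ℝ) + 1)) := by
          apply mul_le_mul_of_nonneg_left (diff_le ha0 ha1 k)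
          positivity
      _ = S ^ (1 / p) * (1 / ((k : ℝ) + 1)) := by
          have hkp : (0:ℝ) < ((k : ℝ) + 1) ^ (1 / p) := Real.rpow_pos_of_pos hk1 _
          field_simp
  have hsum : lorentzNorm p x ≤ S ^ (1 / p) * ∑ k ∈ Finset.range n, (1 / ((k : ℝ) + 1)) := by
    rw [lorentzNorm, hcard, Finset.mul_sum]
    exact Finset.sum_le_sum fun k _ => hterm k
  have hharm : ∑ k ∈ Finset.range n, (1 / ((k : ℝ) + 1)) ≤ 1 + Real.log n := by
    have := harmonic_le_one_add_log n
    have heq : ((harmonic n : ℚ) : ℝ) = ∑ k ∈ Finset.range n, (1 / ((k : ℝ) + 1)) := by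
      rw [harmonic]
      push_cast
      simp [one_div]
    linarith [this, heq.symm.le, heq.le]
  have hlog : Real.log 2 ≤ Real.log n := by
    apply Real.log_le_log (by norm_num)
    exact_mod_cast hn
  have hlog2 : (0.6931471803 : ℝ) < Real.log 2 := Real.log_two_gt_d9
  have hfin : 1 + Real.log n ≤ 3 * Real.log n := by linarith
  calc lorentzNorm p x ≤ S ^ (1 / p) * ∑ k ∈ Finset.range n, (1 / ((k : ℝ) + 1)) := hsum
    _ ≤ S ^ (1 / p) * (1 + Real.log n) := mul_le_mul_of_nonneg_left hharm hSp
    _ ≤ S ^ (1 / p) * (3 * Real.log n) := mul_le_mul_of_nonneg_left hfin hSp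
    _ = 3 * Real.log n * S ^ (1 / p) := by ring
end

section
/- Let m, n ∈ ℕ. For every symmetric matrix a = (a_i)_{i∈M(m,n)}, the diagonal operator D(m,n) sending a to (card[j]^{(m+1)/(2m)} a_j)_{j∈J(m,n)} satisfies ‖D(m,n)a‖_{ℓ_2(J(m,n))} ≤ √m · ‖a‖_{ℓ_2(M(m,n))}. -/
open scoped Classical

/-- `cardClass j` is the number of tuples in `M(m,n) = {1,…,n}^m` obtained by permuting
the coordinates of `j`. -/
noncomputable def cardClass {m n : ℕ} (j : Fin m → Fin n) : ℕ :=
  Nat.card {i : Fin m → Fin n // ∃ σ : Equiv.Perm (Fin m), i = j ∘ σ}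

lemma cardClass_eq_filter {m n : ℕ} (j : Fin m → Fin n) :
    cardClass j = (Finset.univ.filter
      (fun i : Fin m → Fin n => ∃ σ : Equiv.Perm (Fin m), i = j ∘ σ)).card := by
  rw [cardClass, Nat.card_eq_fintype_card, Fintype.card_subtype]

lemma cardClass_le {m n : ℕ} (j : Fin m → Fin n) :
    cardClass j ≤ Nat.factorial m := by
  have hsurj : Function.Surjective
      (fun σ : Equiv.Perm (Fin m) => (⟨j ∘ σ, σ, rfl⟩ :
        {i : Fin m → Fin n // ∃ σ : Equiv.Perm (Fin m), i = j ∘ σ})) := by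
    rintro ⟨i, σ, rfl⟩
    exact ⟨σ, rfl⟩
  have := Nat.card_le_card_of_surjective _ hsurj
  rwa [Nat.card_eq_fintype_card (α := Equiv.Perm (Fin m)), Fintype.card_perm,
    Fintype.card_fin] at this

/-- For every symmetric matrix `a` on `M(m,n)` the diagonal operator
`D(m,n) : a ↦ (card[j]^{(m+1)/(2m)} a_j)_{j ∈ J(m,n)}` satisfies
`‖D(m,n)a‖_{ℓ_2(J(m,n))} ≤ √m · ‖a‖_{ℓ_2(M(m,n))}`. -/
theorem stmt12 (m n : ℕ) (hm : 1 ≤ m) (a : (Fin m → Fin n) → ℂ)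
    (hsymm : ∀ (i : Fin m → Fin n) (σ : Equiv.Perm (Fin m)), a (i ∘ σ) = a i) :
    Real.sqrt (∑ j ∈ Finset.univ.filter (fun j : Fin m → Fin n => Monotone j),
        ((cardClass j : ℝ) ^ (((m : ℝ) + 1) / (2 * m)) * ‖a j‖) ^ 2)
      ≤ Real.sqrt m * Real.sqrt (∑ i : Fin m → Fin n, ‖a i‖ ^ 2) := by
  have hm0 : (0:ℝ) < m := by exact_mod_cast hm
  set S : (Fin m → Fin n) → (Fin m → Fin n) := fun i => i ∘ Tuple.sort i with hS
  -- step 1 : pointwise bound on squared terms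
  have step1 : ∀ j : Fin m → Fin n,
      ((cardClass j : ℝ) ^ (((m : ℝ) + 1) / (2 * m)) * ‖a j‖) ^ 2
        ≤ (m : ℝ) * ((cardClass j : ℝ) * ‖a j‖ ^ 2) := by
    intro j
    have hc0 : (0:ℝ) ≤ (cardClass j : ℝ) := Nat.cast_nonneg _
    rw [mul_pow, ← Real.rpow_natCast ((cardClass j : ℝ) ^ _) 2, ← Real.rpow_mul hc0]
    have hexp : ((m : ℝ) + 1) / (2 * m) * (2:ℕ) = 1 + 1 / m := by
      push_cast
      field_simp
    rw [hexp, Real.rpow_add' hc0 (by positivity), Real.rpow_one]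
    have hle : (cardClass j : ℝ) ^ ((1:ℝ)/m) ≤ (m : ℝ) := by
      have h1 : (cardClass j : ℝ) ≤ (m : ℝ) ^ (m : ℕ) := by
        calc (cardClass j : ℝ) ≤ (Nat.factorial m : ℝ) := by
              exact_mod_cast cardClass_le j
          _ ≤ (m : ℝ) ^ (m : ℕ) := by exact_mod_cast Nat.factorial_le_pow m
      calc (cardClass j : ℝ) ^ ((1:ℝ)/m) ≤ ((m : ℝ) ^ (m : ℕ)) ^ ((1:ℝ)/m) :=
            Real.rpow_le_rpow hc0 h1 (by positivity)
        _ = (m : ℝ) := by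
            rw [← Real.rpow_natCast (m:ℝ) m, ← Real.rpow_mul hm0.le]
            rw [mul_one_div, div_self hm0.ne', Real.rpow_one]
    calc (cardClass j : ℝ) * (cardClass j : ℝ) ^ ((1:ℝ)/m) * ‖a j‖ ^ 2
        ≤ (cardClass j : ℝ) * (m : ℝ) * ‖a j‖ ^ 2 := by
          apply mul_le_mul_of_nonneg_right _ (by positivity)
          exact mul_le_mul_of_nonneg_left hle hc0
      _ = (m : ℝ) * ((cardClass j : ℝ) * ‖a j‖ ^ 2) := by ring
  -- step 2 : ∑_{j mono} card_j |a_j|^2 ≤ ∑_i |a_i|^2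
  have step2 : ∑ j ∈ Finset.univ.filter (fun j : Fin m → Fin n => Monotone j),
      (cardClass j : ℝ) * ‖a j‖ ^ 2
      ≤ ∑ i : Fin m → Fin n, ‖a i‖ ^ 2 := by
    have hfiber : ∀ j : Fin m → Fin n, Monotone j →
        Finset.univ.filter (fun i => S i = j)
          = Finset.univ.filter (fun i : Fin m → Fin n =>
              ∃ σ : Equiv.Perm (Fin m), i = j ∘ σ) := by
      intro j hj
      ext i
      simp only [Finset.mem_filter, Finset.mem_univ, true_and]
      constructor
      · intro h
        exact ⟨(Tuple.sort i)⁻¹, by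
          rw [← h]; simp [hS, Function.comp_assoc, ← Equiv.Perm.coe_mul, Equiv.Perm.mul_symm]⟩
      · rintro ⟨σ, rfl⟩
        have h1 : (j ∘ σ) ∘ Tuple.sort (j ∘ σ) = j ∘ Tuple.sort j :=
          Tuple.comp_perm_comp_sort_eq_comp_sort
        have h2 : Tuple.sort j = Equiv.refl _ :=
          Tuple.sort_eq_refl_iff_monotone.mpr hj
        simpa [hS, h2] using h1
    calc ∑ j ∈ Finset.univ.filter (fun j : Fin m → Fin n => Monotone j),
          (cardClass j : ℝ) * ‖a j‖ ^ 2
        = ∑ j ∈ Finset.univ.filter (fun j : Fin m → Fin n => Monotone j),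
            ∑ i ∈ Finset.univ.filter (fun i => S i = j), ‖a i‖ ^ 2 := by
          apply Finset.sum_congr rfl
          intro j hj
          rw [Finset.mem_filter] at hj
          rw [hfiber j hj.2]
          rw [Finset.sum_congr rfl (fun i hi => ?_), Finset.sum_const,
            nsmul_eq_mul, cardClass_eq_filter]
          rw [Finset.mem_filter] at hi
          obtain ⟨σ, rfl⟩ := hi.2
          rw [hsymm j σ]
      _ ≤ ∑ j : Fin m → Fin n,
            ∑ i ∈ Finset.univ.filter (fun i => S i = j), ‖a i‖ ^ 2 :=
          Finset.sum_le_sum_of_subset_of_nonneg (Finset.filter_subset _ _)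
            (fun _ _ _ => Finset.sum_nonneg fun _ _ => by positivity)
      _ = ∑ i : Fin m → Fin n, ‖a i‖ ^ 2 :=
          Finset.sum_fiberwise _ _ _
  -- combine
  rw [← Real.sqrt_mul hm0.le]
  apply Real.sqrt_le_sqrt
  calc ∑ j ∈ Finset.univ.filter (fun j : Fin m → Fin n => Monotone j),
        ((cardClass j : ℝ) ^ (((m : ℝ) + 1) / (2 * m)) * ‖a j‖) ^ 2
      ≤ ∑ j ∈ Finset.univ.filter (fun j : Fin m → Fin n => Monotone j),
          (m : ℝ) * ((cardClass j : ℝ) * ‖a j‖ ^ 2) :=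
        Finset.sum_le_sum fun j _ => step1 j
    _ = (m : ℝ) * ∑ j ∈ Finset.univ.filter (fun j : Fin m → Fin n => Monotone j),
          (cardClass j : ℝ) * ‖a j‖ ^ 2 := by rw [Finset.mul_sum]
    _ ≤ (m : ℝ) * ∑ i : Fin m → Fin n, ‖a i‖ ^ 2 :=
        mul_le_mul_of_nonneg_left step2 hm0.le
end
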